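/- Let D be a weakly ordered d-tree on {1,…,L} with labels in Σ, and let C be the unique unaryless c-tree whose head-ordered dependency projection is D. Then C is continuous if and only if D is projective and, for every head h, the weak order ≼_h satisfies the nesting property. -/

import Mathlib

/-- A node of a constituent tree: either a pre-terminal over position `i`
(standing for the pre-terminal `(p_i, i, {i})` together with its leaf child `i`),
or a proper node `node Z h cs` with label `Z`, lexical head `h` and children `cs`. -/
inductive CNode (L : ℕ) (Sg : Type) : Type where
  | pre  : Fin L → CNode L Sg
  | node : Sg → Fin L → List (CNode L Sg) → CNode L Sg

namespace CNode

variable {L : ℕ} {Sg : Type}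

/-- The lexical head of a node. -/
def head : CNode L Sg → Fin L
  | pre i => i
  | node _ h _ => h

mutual
  /-- The yield of a node. -/
  def yield : CNode L Sg → Finset (Fin L)
    | pre i => {i}
    | node _ _ cs => yieldList cs
  def yieldList : List (CNode L Sg) → Finset (Fin L)
    | [] => ∅
    | c :: cs => yield c ∪ yieldList cs
end

mutual
  /-- The list of all subtrees (nodes) of a tree, including itself. -/
  def subs : CNode L Sg → List (CNode L Sg)
    | pre i => [pre i]
    | node Z h cs => node Z h cs :: subsList cs
  def subsList : List (CNode L Sg) → List (CNode L Sg)
    | [] => []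
    | c :: cs => subs c ++ subsList cs
end

/-- Well-formedness of a c-tree: children have pairwise disjoint yields and
every proper node has exactly one child whose head is the node's head. -/
inductive Valid : CNode L Sg → Prop where
  | pre (i : Fin L) : Valid (pre i)
  | node (Z : Sg) (h : Fin L) (cs : List (CNode L Sg)) :
      (∀ c ∈ cs, Valid c) →
      cs.Pairwise (fun a b => Disjoint a.yield b.yield) →
      (∃! c, c ∈ cs ∧ head c = h) →
      Valid (node Z h cs)

/-- A c-tree on positions `1,…,L`: a well-formed tree whose leaves are exactly
the `L` positions, each appearing exactly once. -/
def IsCTree (t : CNode L Sg) : Prop := Valid t ∧ t.yield = Finset.univ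

/-- Every proper node has exactly two children. -/
def Binary (t : CNode L Sg) : Prop :=
  ∀ s ∈ t.subs, ∀ Z h cs, s = node Z h cs → cs.length = 2

/-- No proper node has exactly one child. -/
def Unaryless (t : CNode L Sg) : Prop :=
  ∀ s ∈ t.subs, ∀ Z h cs, s = node Z h cs → cs.length ≠ 1

/-- Every node's yield is an interval of consecutive positions. -/
def Continuous (t : CNode L Sg) : Prop :=
  ∀ s ∈ t.subs, ∃ a b : Fin L, s.yield = Finset.Icc a b

/-- `AttachesAt C h m Z n`: `n` is a proper node of `C` with label `Z` and lexical
head `h`, having a (non-head) child whose lexical head is `m ≠ h`;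
i.e. the modifier `m` attaches to `h` at the spine node `n`, generating an arc
`(h, m)` labeled `Z`. -/
def AttachesAt (C : CNode L Sg) (h m : Fin L) (Z : Sg) (n : CNode L Sg) : Prop :=
  n ∈ C.subs ∧ ∃ cs, n = node Z h cs ∧ m ≠ h ∧ ∃ c ∈ cs, head c = m

/-- A proper node with head `h` having at least one non-head child
(i.e. a node of `h`'s spine at which some modifier attaches). -/
def attachB (h : Fin L) : CNode L Sg → Bool
  | pre _ => false
  | node _ h' cs => h' = h && cs.any (fun c => head c != h)

/-- The position, counted from the bottom of the spine of `h`, of the spine node `n`: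
the number of proper nodes with head `h` lying weakly below `n` at which modifiers
attach.  This is the order index (`#1, #2, …`) of the attachment event at `n`. -/
def spineIdx (h : Fin L) (n : CNode L Sg) : ℕ :=
  n.subs.countP (attachB h)

end CNode

/-- An ordered, labeled dependency tree on positions `{1,…,L}` with labels in `Sg`:
`par m = some (h, ℓ, j)` means there is an arc from head `h` to modifier `m`,
carrying label `ℓ` and order index `j` (the position of the attachment event of `m`
in the order of `h`'s modifiers). -/
structure ODTree (L : ℕ) (Sg : Type) : Type where
  root : Fin L
  par : Fin L → Option (Fin L × Sg × ℕ)
  root_par : par root = none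
  reach : ∀ v : Fin L, Relation.ReflTransGen (fun a b => (par b).map (·.1) = some a) root v

namespace ODTree

variable {L : ℕ} {Sg : Type}

/-- The arc relation: `h` is the head of `m`. -/
def arc (D : ODTree L Sg) (h m : Fin L) : Prop := (D.par m).map (·.1) = some h

/-- `D` is a weakly ordered d-tree: for each head, the order indices of its modifiers
are exactly `1, …, J` for some `J` (so they canonically encode a total preorder, i.e.
weak order, on the modifiers), and equivalent modifiers (same index) carry the same
label. -/
def WeaklyOrdered (D : ODTree L Sg) : Prop :=
  (∀ m h ℓ j, D.par m = some (h, ℓ, j) →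
     1 ≤ j ∧ ∀ k, 1 ≤ k → k < j → ∃ m' ℓ', D.par m' = some (h, ℓ', k)) ∧
  (∀ m m' h ℓ ℓ' j, D.par m = some (h, ℓ, j) → D.par m' = some (h, ℓ', j) → ℓ = ℓ')

/-- `D` is a strictly ordered d-tree: additionally, no two modifiers of the same head
share an index, so the indices encode a strict total order on the modifiers. -/
def StrictlyOrdered (D : ODTree L Sg) : Prop :=
  WeaklyOrdered D ∧
  ∀ m m' h ℓ ℓ' j, D.par m = some (h, ℓ, j) → D.par m' = some (h, ℓ', j) → m = m'

/-- Projectivity: for every arc `(h,m)`, every position strictly between `h` and `m`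
is reachable from `h` by a directed path. -/
def Projective (D : ODTree L Sg) : Prop :=
  ∀ h m, D.arc h m → ∀ d : Fin L, min h m < d → d < max h m →
    Relation.ReflTransGen D.arc h d

/-- The nesting property (for weak orders): closer modifiers on the same side of the
head are attached first, i.e. `h < m < m'` or `h > m > m'` implies `m ≺_h m'` or
`m ≡_h m'`, i.e. the index of `m` is at most that of `m'`. -/
def Nested (D : ODTree L Sg) : Prop :=
  ∀ (h m m' : Fin L) (ℓ ℓ' : Sg) (j j' : ℕ),
    D.par m = some (h, ℓ, j) → D.par m' = some (h, ℓ', j') →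
    ((h < m ∧ m < m') ∨ (m' < m ∧ m < h)) → j ≤ j'

/-- The nesting property for strict orders: `h < m < m'` or `h > m > m'` implies
`m ≺_h m'`, i.e. the index of `m` is strictly smaller than that of `m'`. -/
def NestedStrict (D : ODTree L Sg) : Prop :=
  ∀ (h m m' : Fin L) (ℓ ℓ' : Sg) (j j' : ℕ),
    D.par m = some (h, ℓ, j) → D.par m' = some (h, ℓ', j') →
    ((h < m ∧ m < m') ∨ (m' < m ∧ m < h)) → j < j'

end ODTree

/-- `D` is the head-ordered dependency projection of the c-tree `C`:
`D` has an arc `(h, m)` with label `Z` and order index `j` exactly when some proper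
node `n` of `C` with label `Z` and head `h` has a non-head child headed `m`, and `j`
is the position of `n` among the attachment nodes of `h`'s spine, counted from the
bottom (so modifiers attaching at lower spine nodes get smaller indices, and
modifiers attaching at the same spine node get the same index). -/
def IsProjection {L : ℕ} {Sg : Type} (C : CNode L Sg) (D : ODTree L Sg) : Prop :=
  ∀ (h m : Fin L) (ℓ : Sg) (j : ℕ),
    D.par m = some (h, ℓ, j) ↔ ∃ n, CNode.AttachesAt C h m ℓ n ∧ j = CNode.spineIdx h n


namespace CNode

variable {L : ℕ} {Sg : Type}

theorem mem_yieldList {cs : List (CNode L Sg)} {x : Fin L} :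
    x ∈ yieldList cs ↔ ∃ c ∈ cs, x ∈ yield c := by
  induction cs with
  | nil => simp [yieldList]
  | cons c cs ih => simp [yieldList, ih]

theorem mem_subsList {cs : List (CNode L Sg)} {s : CNode L Sg} :
    s ∈ subsList cs ↔ ∃ c ∈ cs, s ∈ subs c := by
  induction cs with
  | nil => simp [subsList]
  | cons c cs ih => simp [subsList, ih]

theorem mem_subs_self (t : CNode L Sg) : t ∈ t.subs := by
  cases t <;> simp [subs]

theorem subs_eq_cons (t : CNode L Sg) : ∃ l, t.subs = t :: l := by
  cases t <;> exact ⟨_, rfl⟩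

theorem subs_sublist_subsList {c : CNode L Sg} {cs : List (CNode L Sg)} (hc : c ∈ cs) :
    List.Sublist c.subs (subsList cs) := by
  induction cs with
  | nil => cases hc
  | cons a cs ih =>
    rcases List.mem_cons.mp hc with rfl | hc
    · exact (List.sublist_append_left _ _).trans (by rw [subsList])
    · exact ((ih hc).trans (List.sublist_append_right _ _)).trans (by rw [subsList])

theorem yield_subset_yieldList {c : CNode L Sg} {cs : List (CNode L Sg)} (hc : c ∈ cs) :
    c.yield ⊆ yieldList cs := by
  intro x hx; exact mem_yieldList.mpr ⟨c, hc, hx⟩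

theorem subs_sublist : ∀ (t s : CNode L Sg), s ∈ t.subs → List.Sublist s.subs t.subs
  | pre i, s, hs => by
      simp [subs] at hs; subst hs; exact List.Sublist.refl _
  | node Z h cs, s, hs => by
      rw [subs] at hs
      rcases List.mem_cons.mp hs with rfl | hs
      · exact List.Sublist.refl _
      · obtain ⟨c, hc, hsc⟩ := mem_subsList.mp hs
        have h1 := subs_sublist c s hsc
        rw [subs]
        exact ((h1.trans (subs_sublist_subsList hc))).trans (List.sublist_cons_self _ _)
termination_by t _ _ => sizeOf t
decreasing_by
  simp_wf
  have := List.sizeOf_lt_of_mem hc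
  omega

theorem mem_subs_trans {s u t : CNode L Sg} (hsu : s ∈ u.subs) (hut : u ∈ t.subs) :
    s ∈ t.subs := (subs_sublist t u hut).subset hsu

theorem subs_antisymm {s t : CNode L Sg} (hst : s ∈ t.subs) (hts : t ∈ s.subs) : s = t := by
  have h1 := subs_sublist t s hst
  have h2 := subs_sublist s t hts
  have := h1.antisymm h2
  obtain ⟨l, hl⟩ := subs_eq_cons s
  obtain ⟨l', hl'⟩ := subs_eq_cons t
  rw [hl, hl'] at this
  exact (List.cons.injEq _ _ _ _ ▸ this).1

theorem yield_subset : ∀ (t s : CNode L Sg), s ∈ t.subs → s.yield ⊆ t.yield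
  | pre i, s, hs => by
      simp [subs] at hs; subst hs; exact Finset.Subset.refl _
  | node Z h cs, s, hs => by
      rw [subs] at hs
      rcases List.mem_cons.mp hs with rfl | hs
      · exact Finset.Subset.refl _
      · obtain ⟨c, hc, hsc⟩ := mem_subsList.mp hs
        have h1 := yield_subset c s hsc
        rw [yield]
        exact h1.trans (yield_subset_yieldList hc)
termination_by t _ _ => sizeOf t
decreasing_by
  simp_wf
  have := List.sizeOf_lt_of_mem hc
  omega

theorem child_mem_subs {Z : Sg} {h : Fin L} {cs : List (CNode L Sg)} {c : CNode L Sg}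
    (hc : c ∈ cs) : c ∈ (node Z h cs).subs := by
  rw [subs]
  exact List.mem_cons_of_mem _ (mem_subsList.mpr ⟨c, hc, mem_subs_self c⟩)


theorem valid_of_mem_subs {t : CNode L Sg} (hv : Valid t) : ∀ s ∈ t.subs, Valid s := by
  induction hv with
  | pre i => intro s hs; simp [subs] at hs; subst hs; exact Valid.pre i
  | node Z h cs hall hdisj huniq ih =>
    intro s hs
    rw [subs] at hs
    rcases List.mem_cons.mp hs with rfl | hs
    · exact Valid.node Z h cs hall hdisj huniq
    · obtain ⟨c, hc, hsc⟩ := mem_subsList.mp hs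
      exact ih c hc s hsc

theorem head_mem_yield {t : CNode L Sg} (hv : Valid t) : t.head ∈ t.yield := by
  induction hv with
  | pre i => simp [head, yield]
  | node Z h cs hall hdisj huniq ih =>
    obtain ⟨c, ⟨hc, hch⟩, _⟩ := huniq
    have := ih c hc
    rw [hch] at this
    rw [yield]
    exact mem_yieldList.mpr ⟨c, hc, this⟩

theorem disjoint_children {cs : List (CNode L Sg)}
    (hdisj : cs.Pairwise (fun a b => Disjoint a.yield b.yield))
    {c c' : CNode L Sg} (hc : c ∈ cs) (hc' : c' ∈ cs) (hne : c ≠ c') :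
    Disjoint c.yield c'.yield :=
  by
    haveI : Std.Symm (fun a b : CNode L Sg => Disjoint a.yield b.yield) := ⟨fun _ _ hr => hr.symm⟩
    exact List.Pairwise.forall hdisj hc hc' hne

/-- Two children of a valid node both containing `x` in their yields are equal. -/
theorem children_eq_of_mem {cs : List (CNode L Sg)}
    (hdisj : cs.Pairwise (fun a b => Disjoint a.yield b.yield))
    {c c' : CNode L Sg} (hc : c ∈ cs) (hc' : c' ∈ cs) {x : Fin L}
    (hx : x ∈ c.yield) (hx' : x ∈ c'.yield) : c = c' := by
  by_contra hne
  exact (Finset.disjoint_left.mp (disjoint_children hdisj hc hc' hne) hx) hx'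

theorem comparable_of_not_disjoint {t : CNode L Sg} (hv : Valid t) :
    ∀ s s' : CNode L Sg, s ∈ t.subs → s' ∈ t.subs → ¬ Disjoint s.yield s'.yield →
      s ∈ s'.subs ∨ s' ∈ s.subs := by
  induction hv with
  | pre i =>
    intro s s' hs hs' _
    simp [subs] at hs hs'; subst hs; subst hs'
    exact Or.inl (mem_subs_self _)
  | node Z h cs hall hdisj huniq ih =>
    intro s s' hs hs' hnd
    rw [subs] at hs hs'
    rcases List.mem_cons.mp hs with rfl | hs
    · exact Or.inr (by rw [subs]; exact hs')
    rcases List.mem_cons.mp hs' with rfl | hs'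
    · exact Or.inl (by rw [subs]; exact List.mem_cons_of_mem _ hs)
    obtain ⟨c, hc, hsc⟩ := mem_subsList.mp hs
    obtain ⟨c', hc', hsc'⟩ := mem_subsList.mp hs'
    by_cases hcc : c = c'
    · subst hcc; exact ih c hc s s' hsc hsc' hnd
    · exfalso
      apply hnd
      exact Finset.disjoint_of_subset_left (yield_subset c s hsc)
        (Finset.disjoint_of_subset_right (yield_subset c' s' hsc')
          (disjoint_children hdisj hc hc' hcc))

/-- Lemma G: a subtree of `n` whose yield contains `head n` has the same head. -/
theorem head_eq_of_head_mem {n : CNode L Sg} (hv : Valid n) :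
    ∀ s ∈ n.subs, n.head ∈ s.yield → s.head = n.head := by
  induction hv with
  | pre i =>
    intro s hs _
    simp [subs] at hs; subst hs; rfl
  | node Z h cs hall hdisj huniq ih =>
    intro s hs hmem
    rw [subs] at hs
    rcases List.mem_cons.mp hs with rfl | hs
    · rfl
    obtain ⟨c, hc, hsc⟩ := mem_subsList.mp hs
    obtain ⟨ch, ⟨hch, hchh⟩, _⟩ := huniq
    have hhead : head (node Z h cs) = h := rfl
    rw [hhead] at hmem ⊢
    have hhc : h ∈ c.yield := yield_subset c s hsc hmem
    have hhch : h ∈ ch.yield := by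
      have := head_mem_yield (hall ch hch); rwa [hchh] at this
    have hceq : c = ch := children_eq_of_mem hdisj hc hch hhc hhch
    subst hceq
    have := ih c hc s hsc (by rwa [hchh])
    rw [this, hchh]

theorem spineIdx_le {s t : CNode L Sg} (h' : Fin L) (hs : s ∈ t.subs) :
    spineIdx h' s ≤ spineIdx h' t :=
  (subs_sublist t s hs).countP_le

theorem spineIdx_lt {s : CNode L Sg} {Z : Sg} {h : Fin L} {cs : List (CNode L Sg)}
    (hs : s ∈ (node Z h cs).subs) (hne : s ≠ node Z h cs)
    (hatt : attachB h (node Z h cs) = true) :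
    spineIdx h s < spineIdx h (node Z h cs) := by
  rw [subs] at hs
  rcases List.mem_cons.mp hs with rfl | hs
  · exact absurd rfl hne
  obtain ⟨c, hc, hsc⟩ := mem_subsList.mp hs
  have h1 : spineIdx h s ≤ (subsList cs).countP (attachB h) :=
    le_trans ((subs_sublist c s hsc).countP_le)
      ((subs_sublist_subsList hc).countP_le)
  have h2 : spineIdx h (node Z h cs) = (subsList cs).countP (attachB h) + 1 := by
    rw [spineIdx, subs, List.countP_cons, hatt]
    simp
  omega

end CNode

section Reach
variable {L : ℕ} {Sg : Type} {D : ODTree L Sg}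

theorem arc_exists {h m : Fin L} (ha : D.arc h m) : ∃ ℓ j, D.par m = some (h, ℓ, j) := by
  rw [ODTree.arc] at ha
  cases hp : D.par m with
  | none => rw [hp] at ha; simp at ha
  | some p =>
    rw [hp] at ha
    simp at ha
    exact ⟨p.2.1, p.2.2, by rw [← ha]⟩

theorem reach_between (hP : D.Projective) {h a : Fin L}
    (hr : Relation.ReflTransGen D.arc h a) :
    ∀ d : Fin L, ((h < d ∧ d < a) ∨ (a < d ∧ d < h)) → Relation.ReflTransGen D.arc h d := by
  induction hr with
  | refl =>
    intro d hd
    rcases hd with ⟨h1, h2⟩ | ⟨h1, h2⟩ <;> exact absurd (h1.trans h2) (lt_irrefl _)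
  | tail hb harc ih =>
    rename_i b c
    intro d hd
    by_cases hdb : d = b
    · subst hdb; exact hb
    by_cases hbet : (b < d ∧ d < c) ∨ (c < d ∧ d < b)
    · refine hb.trans (hP b c harc d ?_ ?_)
      · rcases hbet with ⟨h1, _⟩ | ⟨h1, _⟩
        · exact min_lt_iff.mpr (Or.inl h1)
        · exact min_lt_iff.mpr (Or.inr h1)
      · rcases hbet with ⟨_, h2⟩ | ⟨_, h2⟩
        · exact lt_max_iff.mpr (Or.inr h2)
        · exact lt_max_iff.mpr (Or.inl h2)
    · apply ih
      rcases hd with ⟨h1, h2⟩ | ⟨h1, h2⟩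
      · rcases lt_or_gt_of_ne hdb with hlt | hgt
        · exact Or.inl ⟨h1, hlt⟩
        · exact absurd (Or.inl ⟨hgt, h2⟩) hbet
      · rcases lt_or_gt_of_ne hdb with hlt | hgt
        · exact absurd (Or.inr ⟨h1, hlt⟩) hbet
        · exact Or.inr ⟨hgt, h2⟩

theorem reach_convex (hP : D.Projective) {h a b d : Fin L}
    (hra : Relation.ReflTransGen D.arc h a) (hrb : Relation.ReflTransGen D.arc h b)
    (had : a ≤ d) (hdb : d ≤ b) : Relation.ReflTransGen D.arc h d := by
  rcases eq_or_lt_of_le had with rfl | had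
  · exact hra
  rcases eq_or_lt_of_le hdb with rfl | hdb
  · exact hrb
  rcases lt_trichotomy d h with hlt | rfl | hgt
  · exact reach_between hP hra d (Or.inr ⟨had, hlt⟩)
  · exact Relation.ReflTransGen.refl
  · exact reach_between hP hrb d (Or.inl ⟨hgt, hdb⟩)

theorem convex_eq_Icc {S : Finset (Fin L)} (hne : S.Nonempty)
    (hconv : ∀ x ∈ S, ∀ y ∈ S, ∀ d, x ≤ d → d ≤ y → d ∈ S) :
    ∃ a b : Fin L, S = Finset.Icc a b := by
  refine ⟨S.min' hne, S.max' hne, ?_⟩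
  ext d
  simp only [Finset.mem_Icc]
  constructor
  · intro hd; exact ⟨S.min'_le d hd, S.le_max' d hd⟩
  · rintro ⟨h1, h2⟩
    exact hconv _ (S.min'_mem hne) _ (S.max'_mem hne) d h1 h2

end Reach

section Bridge
open CNode
variable {L : ℕ} {Sg : Type} {C : CNode L Sg} {D : ODTree L Sg}
  (hproj : IsProjection C D) (hvC : Valid C)
include hproj hvC
set_option linter.unusedSectionVars false

/-- Every element of the yield of a subtree is reachable from its head. -/
theorem yield_reach_aux :
    ∀ s : CNode L Sg, Valid s → s ∈ C.subs → ∀ x ∈ s.yield,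
      Relation.ReflTransGen D.arc s.head x := by
  intro s hvs
  induction hvs with
  | pre i =>
    intro _ x hx
    rw [yield] at hx
    simp at hx
    subst hx
    exact Relation.ReflTransGen.refl
  | node Z h cs hall hdisj huniq ih =>
    intro hsC x hx
    rw [yield] at hx
    obtain ⟨c, hc, hxc⟩ := mem_yieldList.mp hx
    have hcC : c ∈ C.subs := mem_subs_trans (child_mem_subs hc) hsC
    have hreach := ih c hc hcC x hxc
    show Relation.ReflTransGen D.arc h x
    by_cases hch : c.head = h
    · rwa [hch] at hreach
    · have hpar : D.par c.head = some (h, Z, spineIdx h (node Z h cs)) :=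
        (hproj h c.head Z (spineIdx h (node Z h cs))).mpr
          ⟨node Z h cs, ⟨hsC, cs, rfl, hch, c, hc, rfl⟩, rfl⟩
      have harc : D.arc h c.head := by rw [ODTree.arc, hpar]; rfl
      exact Relation.ReflTransGen.head harc hreach

theorem yield_reach {s : CNode L Sg} (hs : s ∈ C.subs) {x : Fin L} (hx : x ∈ s.yield) :
    Relation.ReflTransGen D.arc s.head x :=
  yield_reach_aux hproj hvC s (valid_of_mem_subs hvC s hs) hs x hx

/-- Unpack an arc of `D` into an attachment configuration of `C`. -/
theorem par_attach {h m : Fin L} {ℓ : Sg} {j : ℕ} (hp : D.par m = some (h, ℓ, j)) :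
    ∃ (n : CNode L Sg) (cs : List (CNode L Sg)) (c : CNode L Sg),
      n ∈ C.subs ∧ n = node ℓ h cs ∧ m ≠ h ∧ c ∈ cs ∧ c.head = m ∧ j = spineIdx h n := by
  obtain ⟨n, ⟨hnC, cs, hn, hmh, c, hc, hcm⟩, hj⟩ := (hproj h m ℓ j).mp hp
  exact ⟨n, cs, c, hnC, hn, hmh, hc, hcm, hj⟩

/-- Lemma H: everything reachable from a modifier `m` stays inside the child at which
`m` attaches. -/
theorem desc_subset_attach_child {n : CNode L Sg} {Z : Sg} {h m : Fin L}
    {cs : List (CNode L Sg)} {c : CNode L Sg}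
    (hnC : n ∈ C.subs) (hn : n = node Z h cs) (hc : c ∈ cs) (hcm : c.head = m)
    (hmh : m ≠ h) :
    ∀ u : Fin L, Relation.ReflTransGen D.arc m u → u ∈ c.yield := by
  subst hn
  have hcn : c ∈ (node Z h cs).subs := child_mem_subs hc
  have hcC : c ∈ C.subs := mem_subs_trans hcn hnC
  have hvc : Valid c := valid_of_mem_subs hvC c hcC
  have hvn : Valid (node Z h cs) := valid_of_mem_subs hvC _ hnC
  have hdisj : cs.Pairwise (fun a b => Disjoint a.yield b.yield) := by
    cases hvn with
    | node _ _ _ _ hd _ => exact hd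
  intro u hr
  induction hr with
  | refl => exact hcm ▸ head_mem_yield hvc
  | tail hw harc ihw =>
    rename_i w u
    have hwc : w ∈ c.yield := ihw
    obtain ⟨ℓ', j', hpar'⟩ := arc_exists harc
    obtain ⟨n', cs', c'', hn'C, hn', hun, hc'', hc''u, _⟩ := par_attach hproj hvC hpar'
    have hvn' : Valid n' := valid_of_mem_subs hvC n' hn'C
    have hn'head : n'.head = w := by rw [hn']; rfl
    have hwyn' : w ∈ n'.yield := hn'head ▸ head_mem_yield hvn'
    have huyn' : u ∈ n'.yield := by
      have : u ∈ c''.yield := hc''u ▸ head_mem_yield (valid_of_mem_subs hvC c''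
        (mem_subs_trans (hn' ▸ child_mem_subs hc'') hn'C))
      exact yield_subset n' c'' (hn' ▸ child_mem_subs hc'') this
    have hnd : ¬ Disjoint c.yield n'.yield :=
      fun hdis => (Finset.disjoint_left.mp hdis hwc) hwyn'
    rcases comparable_of_not_disjoint hvC c n' hcC hn'C hnd with hcn' | hn'c
    · -- c ∈ n'.subs
      have hch : c.head = n'.head := head_eq_of_head_mem hvn' c hcn' (hn'head ▸ hwc)
      have hwm : w = m := by rw [← hcm, hch, hn'head]
      have hmyn' : m ∈ n'.yield := hwm ▸ hwyn'
      have hmyn : m ∈ (node Z h cs).yield :=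
        yield_subset _ c hcn (hcm ▸ head_mem_yield hvc)
      have hnd2 : ¬ Disjoint n'.yield (node Z h cs).yield :=
        fun hdis => (Finset.disjoint_left.mp hdis hmyn') hmyn
      rcases comparable_of_not_disjoint hvC n' _ hn'C hnC hnd2 with hn'n | hnn'
      · -- n' ∈ n.subs
        by_cases hne : n' = node Z h cs
        · exact absurd (by rw [← hwm, ← hn'head, hne]; rfl : m = h) hmh
        · have hmem : n' ∈ subsList cs := by
            rw [subs] at hn'n
            rcases List.mem_cons.mp hn'n with heq | hmem
            · exact absurd heq hne
            · exact hmem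
          obtain ⟨c₂, hc₂, hn'c₂⟩ := mem_subsList.mp hmem
          have hmyc₂ : m ∈ c₂.yield := yield_subset c₂ n' hn'c₂ hmyn'
          have hmyc : m ∈ c.yield := hcm ▸ head_mem_yield hvc
          have hc₂c : c₂ = c := children_eq_of_mem hdisj hc₂ hc hmyc₂ hmyc
          have : c = n' := subs_antisymm hcn' (hc₂c ▸ hn'c₂)
          rw [this]; exact huyn'
      · -- n ∈ n'.subs : head n = m, contradiction
        exfalso
        apply hmh
        have := head_eq_of_head_mem hvn' _ hnn' (by rw [hn'head, hwm]; exact hmyn)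
        rw [← hcm, hch, ← this]; rfl
    · exact yield_subset c n' hn'c huyn'

/-- Lemma E: any non-head element of the yield of a spine node `s` is dominated by a
modifier attached weakly below `s`, whose descendants all stay inside `s`. -/
theorem find_low_modifier :
    ∀ s : CNode L Sg, Valid s → s ∈ C.subs → ∀ x ∈ s.yield, x ≠ s.head →
      ∃ (m₀ : Fin L) (ℓ₀ : Sg) (i₀ : ℕ),
        D.par m₀ = some (s.head, ℓ₀, i₀) ∧ i₀ ≤ spineIdx s.head s ∧
        Relation.ReflTransGen D.arc m₀ x ∧
        (∀ u, Relation.ReflTransGen D.arc m₀ u → u ∈ s.yield) := by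
  intro s hvs
  induction hvs with
  | pre i =>
    intro _ x hx hxh
    rw [yield] at hx
    simp at hx
    exact absurd hx hxh
  | node Z h cs hall hdisj huniq ih =>
    intro hsC x hx hxh
    have hhead : (node Z h cs).head = h := rfl
    rw [hhead] at hxh ⊢
    rw [yield] at hx
    obtain ⟨c, hc, hxc⟩ := mem_yieldList.mp hx
    have hcsub : c ∈ (node Z h cs).subs := child_mem_subs hc
    have hcC : c ∈ C.subs := mem_subs_trans hcsub hsC
    by_cases hch : c.head = h
    · obtain ⟨m₀, ℓ₀, i₀, hpar₀, hle, hrx, hdesc⟩ :=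
        ih c hc hcC x hxc (by rwa [hch])
      refine ⟨m₀, ℓ₀, i₀, by rwa [hch] at hpar₀, ?_, hrx, ?_⟩
      · calc i₀ ≤ spineIdx c.head c := hle
          _ = spineIdx h c := by rw [hch]
          _ ≤ spineIdx h (node Z h cs) := spineIdx_le h hcsub
      · intro u hu
        exact (yield_subset _ c hcsub) (hdesc u hu)
    · have hpar : D.par c.head = some (h, Z, spineIdx h (node Z h cs)) :=
        (hproj h c.head Z (spineIdx h (node Z h cs))).mpr
          ⟨node Z h cs, ⟨hsC, cs, rfl, hch, c, hc, rfl⟩, rfl⟩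
      refine ⟨c.head, Z, spineIdx h (node Z h cs), hpar, le_refl _, ?_, ?_⟩
      · exact yield_reach hproj hvC hcC hxc
      · intro u hu
        exact (yield_subset _ c hcsub)
          (desc_subset_attach_child hproj hvC hsC rfl hc rfl hch u hu)

end Bridge

/-- Let `D` be a weakly ordered d-tree on `{1,…,L}` with labels in
`Sg`, and let `C` be the (unique, by Proposition 2) unaryless c-tree whose
head-ordered dependency projection is `D`.  Then `C` is continuous if and only if
`D` is projective and, for every head `h`, the weak order on `M_h` satisfies the
nesting property. -/
theorem stmt12 (L : ℕ) (Sg P : Type) [Fintype Sg] (pos : Fin L → P)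
    (D : ODTree L Sg) (hD : D.WeaklyOrdered)
    (C : CNode L Sg) (hC : CNode.IsCTree C) (hU : CNode.Unaryless C)
    (hproj : IsProjection C D) :
    CNode.Continuous C ↔ (D.Projective ∧ D.Nested) := by
  classical
  open CNode in
  obtain ⟨hvC, hyC⟩ := hC
  constructor
  · intro hCont
    constructor
    · -- Projectivity
      intro h m harc d hmin hmax
      obtain ⟨ℓ, j, hpar⟩ := arc_exists harc
      obtain ⟨n, cs, c, hnC, hn, hmh, hc, hcm, hj⟩ := par_attach hproj hvC hpar
      subst hn
      have hvn : Valid (node ℓ h cs) := valid_of_mem_subs hvC _ hnC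
      have hhy : h ∈ (node ℓ h cs).yield := head_mem_yield hvn
      have hmy : m ∈ (node ℓ h cs).yield :=
        yield_subset _ c (child_mem_subs hc)
          (hcm ▸ head_mem_yield (valid_of_mem_subs hvC c
            (mem_subs_trans (child_mem_subs hc) hnC)))
      obtain ⟨a, b, hab⟩ := hCont _ hnC
      have hdy : d ∈ (node ℓ h cs).yield := by
        rw [hab] at hhy hmy ⊢
        rw [Finset.mem_Icc] at hhy hmy ⊢
        constructor
        · exact le_trans (le_min hhy.1 hmy.1) (le_of_lt hmin)
        · exact le_trans (le_of_lt hmax) (max_le hhy.2 hmy.2)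
      exact yield_reach hproj hvC hnC hdy
    · -- Nesting
      intro h m m' ℓ ℓ' j j' hpar hpar' hside
      obtain ⟨n, cs, c, hnC, hn, hmh, hc, hcm, hj⟩ := par_attach hproj hvC hpar
      obtain ⟨n', cs', c', hn'C, hn', hm'h, hc', hcm', hj'⟩ := par_attach hproj hvC hpar'
      have hvn := valid_of_mem_subs hvC n hnC
      have hvn' := valid_of_mem_subs hvC n' hn'C
      have hhn : h ∈ n.yield := by
        have : n.head = h := by rw [hn]; rfl
        exact this ▸ head_mem_yield hvn
      have hhn' : h ∈ n'.yield := by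
        have : n'.head = h := by rw [hn']; rfl
        exact this ▸ head_mem_yield hvn'
      have hnd : ¬ Disjoint n.yield n'.yield :=
        fun hd2 => (Finset.disjoint_left.mp hd2 hhn) hhn'
      rcases comparable_of_not_disjoint hvC n n' hnC hn'C hnd with hsub | hsub'
      · rw [hj, hj']; exact spineIdx_le h hsub
      · by_cases heq : n' = n
        · rw [hj, hj', heq]
        · exfalso
          subst hn
          have hmem : n' ∈ subsList cs := by
            rw [subs] at hsub'
            rcases List.mem_cons.mp hsub' with he | hm2
            · exact absurd he heq
            · exact hm2
          obtain ⟨c₂, hc₂, hn'c₂⟩ := mem_subsList.mp hmem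
          have hdisj : cs.Pairwise (fun a b => Disjoint a.yield b.yield) := by
            cases hvn with | node _ _ _ _ hd _ => exact hd
          have huniq : ∃! cc, cc ∈ cs ∧ head cc = h := by
            cases hvn with | node _ _ _ _ _ hu => exact hu
          obtain ⟨chd, ⟨hchd, hchdh⟩, _⟩ := huniq
          have hhc₂ : h ∈ c₂.yield := yield_subset c₂ n' hn'c₂ hhn'
          have hhchd : h ∈ chd.yield := hchdh ▸ head_mem_yield
            (valid_of_mem_subs hvC chd (mem_subs_trans (child_mem_subs hchd) hnC))
          have hc₂chd : c₂ = chd := children_eq_of_mem hdisj hc₂ hchd hhc₂ hhchd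
          have hcne : c ≠ chd := fun he => hmh (by rw [← hcm, he, hchdh])
          have hmyc : m ∈ c.yield := hcm ▸ head_mem_yield
            (valid_of_mem_subs hvC c (mem_subs_trans (child_mem_subs hc) hnC))
          have hmn' : m ∉ n'.yield := by
            intro hmem'
            have hmchd : m ∈ chd.yield := hc₂chd ▸ yield_subset c₂ n' hn'c₂ hmem'
            exact (Finset.disjoint_left.mp
              (disjoint_children hdisj hc hchd hcne) hmyc) hmchd
          have hm'n' : m' ∈ n'.yield := by
            rw [hn']
            exact yield_subset _ c' (child_mem_subs hc')
              (hcm' ▸ head_mem_yield (valid_of_mem_subs hvC c'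
                (mem_subs_trans (hn' ▸ child_mem_subs hc') hn'C)))
          obtain ⟨a, b, hab⟩ := hCont n' hn'C
          apply hmn'
          rw [hab] at hhn' hm'n' ⊢
          rw [Finset.mem_Icc] at hhn' hm'n' ⊢
          rcases hside with ⟨h1, h2⟩ | ⟨h1, h2⟩
          · exact ⟨le_trans hhn'.1 (le_of_lt h1), le_trans (le_of_lt h2) hm'n'.2⟩
          · exact ⟨le_trans hm'n'.1 (le_of_lt h1), le_trans (le_of_lt h2) hhn'.2⟩
  · rintro ⟨hP, hN⟩
    intro s hsC
    have hvs : Valid s := valid_of_mem_subs hvC s hsC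
    have hsyne : s.yield.Nonempty := ⟨s.head, head_mem_yield hvs⟩
    apply convex_eq_Icc hsyne
    intro x hxy y hyy d hxd hdy
    by_contra hds
    have hxd' : x < d := lt_of_le_of_ne hxd (fun he => hds (he ▸ hxy))
    have hdy'' : d < y := lt_of_le_of_ne hdy (fun he => hds (he.symm ▸ hyy))
    have hhs : s.head ∈ s.yield := head_mem_yield hvs
    have hdh : d ≠ s.head := fun he => hds (he ▸ hhs)
    have hreachd : Relation.ReflTransGen D.arc s.head d := by
      rcases lt_or_gt_of_ne hdh with hlt | hgt
      · exact reach_between hP (yield_reach hproj hvC hsC hxy) d (Or.inr ⟨hxd', hlt⟩)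
      · exact reach_between hP (yield_reach hproj hvC hsC hyy) d (Or.inl ⟨hgt, hdy''⟩)
    rcases Relation.ReflTransGen.cases_head hreachd with he | ⟨m₁, harc1, hr1d⟩
    · exact hdh he.symm
    obtain ⟨ℓ₁, i, hpar1⟩ := arc_exists harc1
    obtain ⟨n₁, cs₁, c₁, hn₁C, hn₁, hm₁h, hc₁, hc₁m, hi⟩ := par_attach hproj hvC hpar1
    have hdesc1 : ∀ u, Relation.ReflTransGen D.arc m₁ u → u ∈ c₁.yield :=
      desc_subset_attach_child hproj hvC hn₁C hn₁ hc₁ hc₁m hm₁h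
    have hdc₁ : d ∈ c₁.yield := hdesc1 d hr1d
    subst hn₁
    by_cases hn₁s : node ℓ₁ s.head cs₁ ∈ s.subs
    · exact hds (yield_subset s _ hn₁s
        (yield_subset _ c₁ (child_mem_subs hc₁) hdc₁))
    have hvn₁ := valid_of_mem_subs hvC _ hn₁C
    have hhn₁ : s.head ∈ (node ℓ₁ s.head cs₁).yield := head_mem_yield hvn₁
    have hndd : ¬ Disjoint s.yield (node ℓ₁ s.head cs₁).yield :=
      fun hd2 => (Finset.disjoint_left.mp hd2 hhs) hhn₁
    have hsn₁ : s ∈ (node ℓ₁ s.head cs₁).subs := by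
      rcases comparable_of_not_disjoint hvC s _ hsC hn₁C hndd with hx | hx
      · exact hx
      · exact absurd hx hn₁s
    have hsne : s ≠ node ℓ₁ s.head cs₁ := fun he => hn₁s (he ▸ mem_subs_self s)
    have hattB : attachB s.head (node ℓ₁ s.head cs₁) = true := by
      simp only [attachB, Bool.and_eq_true, List.any_eq_true, bne_iff_ne, decide_eq_true_eq]
      exact ⟨trivial, c₁, hc₁, by rw [hc₁m]; exact hm₁h⟩
    have hilt : spineIdx s.head s < i := hi ▸ spineIdx_lt hsn₁ hsne hattB
    -- yield s is disjoint from yield c₁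
    have hmem : s ∈ subsList cs₁ := by
      rw [subs] at hsn₁
      rcases List.mem_cons.mp hsn₁ with he | hm2
      · exact absurd he hsne
      · exact hm2
    obtain ⟨c', hc'₁, hsc'⟩ := mem_subsList.mp hmem
    have hdisj₁ : cs₁.Pairwise (fun a b => Disjoint a.yield b.yield) := by
      cases hvn₁ with | node _ _ _ _ hd _ => exact hd
    have huniq₁ : ∃! cc, cc ∈ cs₁ ∧ head cc = s.head := by
      cases hvn₁ with | node _ _ _ _ _ hu => exact hu
    obtain ⟨chd, ⟨hchd, hchdh⟩, _⟩ := huniq₁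
    have hhc' : s.head ∈ c'.yield := yield_subset c' s hsc' hhs
    have hhchd : s.head ∈ chd.yield := hchdh ▸ head_mem_yield
      (valid_of_mem_subs hvC chd (mem_subs_trans (child_mem_subs hchd) hn₁C))
    have hc'chd : c' = chd := children_eq_of_mem hdisj₁ hc'₁ hchd hhc' hhchd
    have hchdne : chd ≠ c₁ := fun he => hm₁h (by rw [← hc₁m, ← he, hchdh])
    have hdisjsc₁ : Disjoint s.yield c₁.yield :=
      Finset.disjoint_of_subset_left (hc'chd ▸ yield_subset c' s hsc')
        (disjoint_children hdisj₁ hchd hc₁ hchdne)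
    have hnotc₁ : ∀ z, z ∈ s.yield → z ∉ c₁.yield := fun z hz => Finset.disjoint_left.mp hdisjsc₁ hz
    rcases lt_or_gt_of_ne hdh with hlt | hgt
    · -- d < s.head : use x
      have hm₁lt : m₁ < s.head := by
        rcases lt_or_gt_of_ne hm₁h with h1 | h1
        · exact h1
        · exact absurd (hdesc1 s.head
            (reach_convex hP hr1d Relation.ReflTransGen.refl (le_of_lt hlt) (le_of_lt h1)))
            (hnotc₁ _ hhs)
      have hxh : x ≠ s.head := ne_of_lt (lt_trans hxd' hlt)
      obtain ⟨m₀, ℓ₀, i₀, hpar₀, hle₀, hr₀x, hdesc₀⟩ :=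
        find_low_modifier hproj hvC s hvs hsC x hxy hxh
      have hm₀d : m₀ < d := by
        by_contra hcon
        push_neg at hcon
        exact hds (hdesc₀ d (reach_convex hP hr₀x Relation.ReflTransGen.refl hxd hcon))
      have hm₀m₁ : m₀ < m₁ := by
        by_contra hcon
        push_neg at hcon
        exact hnotc₁ m₀ (hdesc₀ m₀ Relation.ReflTransGen.refl)
          (hdesc1 m₀ (reach_convex hP Relation.ReflTransGen.refl hr1d hcon (le_of_lt hm₀d)))
      have := hN s.head m₁ m₀ ℓ₁ ℓ₀ i i₀ hpar1 hpar₀ (Or.inr ⟨hm₀m₁, hm₁lt⟩)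
      omega
    · -- s.head < d : use y
      have hm₁gt : s.head < m₁ := by
        rcases lt_or_gt_of_ne hm₁h with h1 | h1
        · exact absurd (hdesc1 s.head
            (reach_convex hP Relation.ReflTransGen.refl hr1d (le_of_lt h1) (le_of_lt hgt)))
            (hnotc₁ _ hhs)
        · exact h1
      have hyh : y ≠ s.head := ne_of_gt (lt_trans hgt hdy'')
      obtain ⟨m₀, ℓ₀, i₀, hpar₀, hle₀, hr₀y, hdesc₀⟩ :=
        find_low_modifier hproj hvC s hvs hsC y hyy hyh
      have hm₀d : d < m₀ := by
        by_contra hcon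
        push_neg at hcon
        exact hds (hdesc₀ d (reach_convex hP Relation.ReflTransGen.refl hr₀y hcon hdy))
      have hm₀m₁ : m₁ < m₀ := by
        by_contra hcon
        push_neg at hcon
        exact hnotc₁ m₀ (hdesc₀ m₀ Relation.ReflTransGen.refl)
          (hdesc1 m₀ (reach_convex hP hr1d Relation.ReflTransGen.refl (le_of_lt hm₀d) hcon))
      have := hN s.head m₁ m₀ ℓ₁ ℓ₀ i i₀ hpar1 hpar₀ (Or.inl ⟨hm₁gt, hm₀m₁⟩)
      omega
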